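/- Fix $e\ge2$ and $k\ge2$. For every standard tableau $\mathtt t$ of size $n$ with at most $k$ columns, the combinatorial degree $\deg_e(\mathtt t)$ (defined recursively via addable/removable nodes) equals the path degree $\deg_e(\pi_{\mathtt t})=\sum_{a=0}^{n-1}\sum_{\alpha\in\Phi^+}\deg_{e,\alpha}(\pi_{\mathtt t}(a),\pi_{\mathtt t}(a+1))$. -/

import Mathlib

open scoped Classical
noncomputable section

/-- A standard tableau of size `n` (0-based nodes): injective, image is a
Young diagram (downward closed), entries increase along rows and columns. -/
def IsStdTab (n : ℕ) (t : Fin n → ℕ × ℕ) : Prop :=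
  Function.Injective t ∧
  (∀ r : Fin n, ∀ a b : ℕ, a ≤ (t r).1 → b ≤ (t r).2 → ∃ r' : Fin n, t r' = (a, b)) ∧
  (∀ r s : Fin n, (t r).1 ≤ (t s).1 → (t r).2 ≤ (t s).2 → r ≤ s)

/-- Number of entries among the first `a` entries lying in column `j`. -/
def cntCol (n : ℕ) (t : Fin n → ℕ × ℕ) (a j : ℕ) : ℕ :=
  (Finset.univ.filter fun r : Fin n => (r : ℕ) < a ∧ (t r).2 = j).card

/-- The residue of a node (0-based): column minus row, mod `e`. -/
def resNode (e : ℕ) (v : ℕ × ℕ) : ZMod e := (v.2 : ZMod e) - (v.1 : ZMod e)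

/-- The Young diagram formed by the first `a` entries of `t`. -/
def diagOf (n : ℕ) (t : Fin n → ℕ × ℕ) (a : ℕ) : Finset (ℕ × ℕ) :=
  (Finset.univ.filter fun r : Fin n => (r : ℕ) < a).image t

/-- `x` is a removable node of the Young diagram `D`. -/
def Removable (D : Finset (ℕ × ℕ)) (x : ℕ × ℕ) : Prop :=
  x ∈ D ∧ (x.1 + 1, x.2) ∉ D ∧ (x.1, x.2 + 1) ∉ D

/-- `x` is an addable node for the Young diagram `D`. -/
def Addable (D : Finset (ℕ × ℕ)) (x : ℕ × ℕ) : Prop :=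
  x ∉ D ∧ (x.1 = 0 ∨ (x.1 - 1, x.2) ∈ D) ∧ (x.2 = 0 ∨ (x.1, x.2 - 1) ∈ D)

/-- `d_A(D)`: the number of addable nodes of the same residue as `A` strictly
below `A`, minus the number of removable such nodes (for diagrams with at
most `n` cells all relevant nodes have coordinates `< n + 2`). -/
def dnode (e n : ℕ) (D : Finset (ℕ × ℕ)) (A : ℕ × ℕ) : ℤ :=
  (((Finset.range (n + 2) ×ˢ Finset.range (n + 2)).filter
      fun x => Addable D x ∧ resNode e x = resNode e A ∧ A.1 < x.1).card : ℤ) -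
  (((Finset.range (n + 2) ×ˢ Finset.range (n + 2)).filter
      fun x => Removable D x ∧ resNode e x = resNode e A ∧ A.1 < x.1).card : ℤ)

/-- The combinatorial degree of a standard tableau (unfolding the recursion
`deg(t) = d_{t(n)}(Shape t) + deg(t↓_{n-1})`). -/
def tabDeg (e n : ℕ) (t : Fin n → ℕ × ℕ) : ℤ :=
  ∑ r : Fin n, dnode e n (diagOf n t ((r : ℕ) + 1)) (t r)

/-- `(π_t(a) + ρ, ε_r - ε_s)` in terms of column counts, where
`ρ = ∑ (k - i) ε_i`. -/
def pairVal (n : ℕ) (t : Fin n → ℕ × ℕ) (a r s : ℕ) : ℤ :=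
  (cntCol n t a r : ℤ) - (cntCol n t a s : ℤ) + ((s : ℤ) - (r : ℤ))

/-- `deg_{e,α}(u,v)` in terms of the pairings `U = (u+ρ,α)`, `V = (v+ρ,α)`. -/
def degPairStep (e : ℕ) (U V : ℤ) : ℤ :=
  if (0 < U ∧ (e : ℤ) ∣ U) ∧ V < U then 1
  else if (0 < V ∧ (e : ℤ) ∣ V) ∧ V < U then -1
  else 0

/-- The degree of the path `π_t`, summed over all steps and all positive
roots `ε_r - ε_s`, `r < s < k`. -/
def pathDegK (e k n : ℕ) (t : Fin n → ℕ × ℕ) : ℤ :=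
  ∑ a ∈ Finset.range n, ∑ r ∈ Finset.range k, ∑ s ∈ Finset.Ico (r + 1) k,
    degPairStep e (pairVal n t a r s) (pairVal n t (a + 1) r s)

namespace Stmt7

open Finset

lemma downclosed_eq_range {S : Finset ℕ} (h : ∀ x ∈ S, ∀ y, y < x → y ∈ S) :
    S = Finset.range S.card := by
  have hsub : S ⊆ Finset.range S.card := by
    intro x hx
    rw [Finset.mem_range]
    by_contra hlt
    push_neg at hlt
    have h1 : Finset.range (x + 1) ⊆ S := by
      intro y hy
      rw [Finset.mem_range, Nat.lt_succ_iff] at hy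
      rcases Nat.lt_or_ge y x with hy' | hy'
      · exact h x hx y hy'
      · have : y = x := le_antisymm hy hy'
        exact this ▸ hx
    have h2 := Finset.card_le_card h1
    rw [Finset.card_range] at h2
    omega
  exact Finset.eq_of_subset_of_card_le hsub (by rw [Finset.card_range])

lemma mem_diagOf {n : ℕ} {t : Fin n → ℕ × ℕ} {a : ℕ} {x : ℕ × ℕ} :
    x ∈ diagOf n t a ↔ ∃ r : Fin n, (r : ℕ) < a ∧ t r = x := by
  simp [diagOf]

lemma diag_closed {n : ℕ} {t : Fin n → ℕ × ℕ} (ht : IsStdTab n t) {a : ℕ}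
    {i m i' m' : ℕ} (hx : (i, m) ∈ diagOf n t a) (hi : i' ≤ i) (hm : m' ≤ m) :
    (i', m') ∈ diagOf n t a := by
  rw [mem_diagOf] at hx ⊢
  obtain ⟨r, hr, hrt⟩ := hx
  obtain ⟨r', hr'⟩ := ht.2.1 r i' m' (by rw [hrt]; exact hi) (by rw [hrt]; exact hm)
  have hle : r' ≤ r := ht.2.2 r' r (by rw [hrt, hr']; exact hi) (by rw [hrt, hr']; exact hm)
  exact ⟨r', lt_of_le_of_lt (by exact_mod_cast hle) hr, hr'⟩

lemma mem_diag_iff_lt_cnt {n : ℕ} {t : Fin n → ℕ × ℕ} (ht : IsStdTab n t)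
    (a i m : ℕ) : (i, m) ∈ diagOf n t a ↔ i < cntCol n t a m := by
  classical
  set S : Finset ℕ :=
    (Finset.univ.filter fun r : Fin n => (r : ℕ) < a ∧ (t r).2 = m).image
      (fun r => (t r).1) with hS
  have hcard : S.card = cntCol n t a m := by
    rw [hS]
    apply Finset.card_image_of_injOn
    intro r hr r' hr' hrr
    simp only [Finset.coe_filter, Finset.mem_univ, Set.mem_setOf_eq, true_and] at hr hr'
    exact ht.1 (Prod.ext hrr (hr.2.trans hr'.2.symm))
  have hmem : ∀ i : ℕ, (i, m) ∈ diagOf n t a ↔ i ∈ S := by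
    intro i
    rw [mem_diagOf, hS]
    simp only [Finset.mem_image, Finset.mem_filter, Finset.mem_univ, true_and]
    constructor
    · rintro ⟨r, hr, hrt⟩
      exact ⟨r, ⟨hr, by rw [hrt]⟩, by rw [hrt]⟩
    · rintro ⟨r, ⟨hr, h2⟩, h1⟩
      refine ⟨r, hr, ?_⟩
      rw [← h1, ← h2]
    
  have hdc : ∀ x ∈ S, ∀ y, y < x → y ∈ S := by
    intro x hx y hy
    rw [← hmem] at hx ⊢
    exact diag_closed ht hx (le_of_lt hy) le_rfl
  rw [hmem, downclosed_eq_range hdc, Finset.mem_range, hcard]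

end Stmt7

namespace Stmt7

open Finset

lemma cntCol_succ {n : ℕ} {t : Fin n → ℕ × ℕ} (a : Fin n) (m : ℕ) :
    cntCol n t ((a : ℕ) + 1) m = cntCol n t (a : ℕ) m + if (t a).2 = m then 1 else 0 := by
  classical
  unfold cntCol
  have hsplit : (Finset.univ.filter fun r : Fin n => (r : ℕ) < (a : ℕ) + 1 ∧ (t r).2 = m)
      = (Finset.univ.filter fun r : Fin n => (r : ℕ) < (a : ℕ) ∧ (t r).2 = m)
        ∪ (Finset.univ.filter fun r : Fin n => r = a ∧ (t r).2 = m) := by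
    ext r
    simp only [Finset.mem_filter, Finset.mem_univ, true_and, Finset.mem_union]
    constructor
    · rintro ⟨h1, h2⟩
      rcases Nat.lt_succ_iff_lt_or_eq.mp h1 with h | h
      · exact Or.inl ⟨h, h2⟩
      · exact Or.inr ⟨Fin.ext h, h2⟩
    · rintro (⟨h1, h2⟩ | ⟨rfl, h2⟩)
      · exact ⟨Nat.lt_succ_of_lt h1, h2⟩
      · exact ⟨Nat.lt_succ_self _, h2⟩
  have hdisj : Disjoint (Finset.univ.filter fun r : Fin n => (r : ℕ) < (a : ℕ) ∧ (t r).2 = m)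
      (Finset.univ.filter fun r : Fin n => r = a ∧ (t r).2 = m) := by
    rw [Finset.disjoint_left]
    intro r h1 h2
    simp only [Finset.mem_filter, Finset.mem_univ, true_and] at h1 h2
    rw [h2.1] at h1
    exact absurd h1.1 (lt_irrefl _)
  rw [hsplit, Finset.card_union_of_disjoint hdisj]
  congr 1
  by_cases h : (t a).2 = m
  · rw [if_pos h, Finset.card_eq_one]
    refine ⟨a, ?_⟩
    ext r
    simp only [Finset.mem_filter, Finset.mem_univ, true_and, Finset.mem_singleton]
    constructor
    · rintro ⟨rfl, _⟩; rfl
    · rintro rfl; exact ⟨rfl, h⟩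
  · rw [if_neg h, Finset.card_eq_zero]
    ext r
    simp only [Finset.mem_filter, Finset.mem_univ, true_and, Finset.notMem_empty, iff_false,
      not_and]
    rintro rfl; exact h

lemma cnt_anti {n : ℕ} {t : Fin n → ℕ × ℕ} (ht : IsStdTab n t) (a : ℕ)
    {m m' : ℕ} (h : m' ≤ m) : cntCol n t a m ≤ cntCol n t a m' := by
  by_cases hz : cntCol n t a m = 0
  · rw [hz]; exact Nat.zero_le _
  · have h1 : (cntCol n t a m - 1, m) ∈ diagOf n t a := by
      rw [mem_diag_iff_lt_cnt ht]; omega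
    have h2 := diag_closed ht h1 le_rfl h
    rw [mem_diag_iff_lt_cnt ht] at h2
    omega

lemma cnt_le {n : ℕ} {t : Fin n → ℕ × ℕ} (a m : ℕ) : cntCol n t a m ≤ a := by
  classical
  unfold cntCol
  calc (Finset.univ.filter fun r : Fin n => (r : ℕ) < a ∧ (t r).2 = m).card
      ≤ (Finset.range a).card := by
        refine Finset.card_le_card_of_injOn (fun r => (r : ℕ)) ?_ ?_
        · intro r hr
          simp only [Finset.mem_coe, Finset.mem_filter] at hr
          exact Finset.mem_range.mpr hr.2.1
        · intro r _ r' _ hrr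
          exact Fin.ext hrr
    _ = a := Finset.card_range a

lemma col_le {n : ℕ} {t : Fin n → ℕ × ℕ} (ht : IsStdTab n t) (a : Fin n) :
    (t a).2 ≤ (a : ℕ) := by
  classical
  have hta : ((t a).1, (t a).2) ∈ diagOf n t ((a : ℕ) + 1) := by
    rw [Prod.mk.eta]
    exact mem_diagOf.mpr ⟨a, Nat.lt_succ_self _, rfl⟩
  have hsub : (Finset.range ((t a).2 + 1)).image (fun m => ((0 : ℕ), m))
      ⊆ diagOf n t ((a : ℕ) + 1) := by
    intro x hx
    simp only [Finset.mem_image, Finset.mem_range] at hx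
    obtain ⟨m, hm, rfl⟩ := hx
    exact diag_closed ht hta (Nat.zero_le _) (Nat.lt_succ_iff.mp hm)
  have h1 : ((Finset.range ((t a).2 + 1)).image (fun m => ((0 : ℕ), m))).card
      = (t a).2 + 1 := by
    rw [Finset.card_image_of_injective _ (fun x y h => (Prod.mk.injEq _ _ _ _).mp h |>.2),
      Finset.card_range]
  have h2 := Finset.card_le_card hsub
  have h3 : (diagOf n t ((a : ℕ) + 1)).card ≤ (a : ℕ) + 1 := by
    unfold diagOf
    calc ((Finset.univ.filter fun r : Fin n => (r : ℕ) < (a : ℕ) + 1).image t).card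
        ≤ (Finset.univ.filter fun r : Fin n => (r : ℕ) < (a : ℕ) + 1).card :=
          Finset.card_image_le
      _ ≤ (Finset.range ((a : ℕ) + 1)).card := by
          refine Finset.card_le_card_of_injOn (fun r => (r : ℕ)) ?_ ?_
          · intro r hr
            simp only [Finset.mem_coe, Finset.mem_filter] at hr
            exact Finset.mem_range.mpr hr.2
          · intro r _ r' _ hrr
            exact Fin.ext hrr
      _ = (a : ℕ) + 1 := Finset.card_range _
  omega

lemma row_eq_cnt {n : ℕ} {t : Fin n → ℕ × ℕ} (ht : IsStdTab n t) (a : Fin n) :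
    (t a).1 = cntCol n t (a : ℕ) (t a).2 := by
  have h1 : ((t a).1, (t a).2) ∈ diagOf n t ((a : ℕ) + 1) := by
    rw [Prod.mk.eta]
    exact mem_diagOf.mpr ⟨a, Nat.lt_succ_self _, rfl⟩
  rw [mem_diag_iff_lt_cnt ht, cntCol_succ, if_pos rfl] at h1
  have h2 : ((t a).1, (t a).2) ∉ diagOf n t (a : ℕ) := by
    rw [Prod.mk.eta, mem_diagOf]
    rintro ⟨r, hr, hrt⟩
    have hra : r = a := ht.1 hrt
    rw [hra] at hr
    exact absurd hr (lt_irrefl _)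
  rw [mem_diag_iff_lt_cnt ht] at h2
  omega

lemma add_ok {n : ℕ} {t : Fin n → ℕ × ℕ} (ht : IsStdTab n t) (a : Fin n)
    (hj : (t a).2 ≠ 0) :
    cntCol n t (a : ℕ) (t a).2 < cntCol n t (a : ℕ) ((t a).2 - 1) := by
  have hta : ((t a).1, (t a).2) ∈ diagOf n t ((a : ℕ) + 1) := by
    rw [Prod.mk.eta]
    exact mem_diagOf.mpr ⟨a, Nat.lt_succ_self _, rfl⟩
  have h1 : ((t a).1, (t a).2 - 1) ∈ diagOf n t ((a : ℕ) + 1) :=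
    diag_closed ht hta le_rfl (Nat.sub_le _ _)
  rw [mem_diagOf] at h1
  obtain ⟨r, hr, hrt⟩ := h1
  have hra : r ≠ a := by
    intro h
    rw [h] at hrt
    have := congrArg Prod.snd hrt
    simp only at this
    omega
  have hr' : (r : ℕ) < (a : ℕ) := by
    rcases Nat.lt_succ_iff_lt_or_eq.mp hr with h | h
    · exact h
    · exact absurd (Fin.ext h) hra
  have h2 : ((t a).1, (t a).2 - 1) ∈ diagOf n t (a : ℕ) := mem_diagOf.mpr ⟨r, hr', hrt⟩
  rw [mem_diag_iff_lt_cnt ht] at h2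
  rw [← row_eq_cnt ht]
  exact h2

end Stmt7

namespace Stmt7

open Finset

lemma addable_iff {n : ℕ} {t : Fin n → ℕ × ℕ} (ht : IsStdTab n t) (b : ℕ)
    (x : ℕ × ℕ) :
    Addable (diagOf n t b) x ↔
      x.1 = cntCol n t b x.2 ∧
        (x.2 = 0 ∨ cntCol n t b x.2 < cntCol n t b (x.2 - 1)) := by
  obtain ⟨i, m⟩ := x
  simp only [Addable, mem_diag_iff_lt_cnt ht]
  constructor
  · rintro ⟨h1, h2, h3⟩
    omega
  · rintro ⟨h1, h2⟩
    omega

lemma removable_iff {n : ℕ} {t : Fin n → ℕ × ℕ} (ht : IsStdTab n t) (b : ℕ)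
    (x : ℕ × ℕ) :
    Removable (diagOf n t b) x ↔
      x.1 + 1 = cntCol n t b x.2 ∧ cntCol n t b (x.2 + 1) ≤ x.1 := by
  obtain ⟨i, m⟩ := x
  simp only [Removable, mem_diag_iff_lt_cnt ht]
  omega

lemma resNode_eq_iff (e : ℕ) (x y : ℕ × ℕ) :
    resNode e x = resNode e y ↔
      (e : ℤ) ∣ ((y.2 : ℤ) - (y.1 : ℤ)) - (((x.2 : ℤ)) - (x.1 : ℤ)) := by
  unfold resNode
  rw [show ((x.2 : ZMod e) - (x.1 : ZMod e)) = (((x.2 : ℤ) - (x.1 : ℤ) : ℤ) : ZMod e) by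
        push_cast; ring,
    show ((y.2 : ZMod e) - (y.1 : ZMod e)) = (((y.2 : ℤ) - (y.1 : ℤ) : ℤ) : ZMod e) by
        push_cast; ring,
    ZMod.intCast_eq_intCast_iff, Int.modEq_iff_dvd]

lemma not_dvd_one {e : ℕ} (he : 2 ≤ e) : ¬ (e : ℤ) ∣ 1 := by
  intro h
  have := Int.le_of_dvd one_pos h
  omega

end Stmt7

namespace Stmt7

open Finset

/-- pairing value `(c m - c j) + (j - m)`. -/
def W (c : ℕ → ℕ) (j m : ℕ) : ℤ := (c m : ℤ) - (c j : ℤ) + ((j : ℤ) - (m : ℤ))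

/-- addable-node predicate for column `m`. -/
def aP (e : ℕ) (c : ℕ → ℕ) (j m : ℕ) : Prop :=
  (m = 0 ∨ c m < c (m - 1)) ∧ (e : ℤ) ∣ W c j m

/-- removable-node predicate for column `m`. -/
def rP (e : ℕ) (c : ℕ → ℕ) (j m : ℕ) : Prop :=
  (c (m + 1) + (if j = m + 1 then 1 else 0) < c m) ∧ (e : ℤ) ∣ W c j m - 1

lemma cnt_lt {n : ℕ} {t : Fin n → ℕ × ℕ} (ht : IsStdTab n t) (a : Fin n)
    {m : ℕ} (hm : m < (t a).2) :
    cntCol n t (a : ℕ) (t a).2 < cntCol n t (a : ℕ) m := by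
  have h1 := add_ok ht a (by omega)
  have h2 := cnt_anti ht (a : ℕ) (show m ≤ (t a).2 - 1 by omega)
  omega

lemma Aset_eq (e k n : ℕ) (he : 2 ≤ e) {t : Fin n → ℕ × ℕ} (ht : IsStdTab n t)
    (hcols : ∀ r, (t r).2 < k) (a : Fin n) :
    ((Finset.range (n + 2) ×ˢ Finset.range (n + 2)).filter
        fun x => Addable (diagOf n t ((a : ℕ) + 1)) x ∧
          resNode e x = resNode e (t a) ∧ (t a).1 < x.1)
      = ((Finset.range (t a).2).filter
          (aP e (fun m => cntCol n t (a : ℕ) m) (t a).2)).image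
          (fun m => (cntCol n t (a : ℕ) m, m)) := by
  classical
  have hrow := row_eq_cnt ht a
  have hja := col_le ht a
  have han : (a : ℕ) < n := a.isLt
  have hsucc : ∀ m, cntCol n t ((a : ℕ) + 1) m
      = cntCol n t (a : ℕ) m + if (t a).2 = m then 1 else 0 := fun m => cntCol_succ a m
  ext x
  simp only [Finset.mem_filter, Finset.mem_product, Finset.mem_range, Finset.mem_image,
    aP, W]
  constructor
  · rintro ⟨⟨hx1, hx2⟩, haddx, hres, hbelow⟩
    rw [addable_iff ht] at haddx
    obtain ⟨hx1e, hcond⟩ := haddx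
    rw [resNode_eq_iff] at hres
    rcases lt_trichotomy x.2 (t a).2 with hm | hm | hm
    · -- x.2 < j : produce the witness
      rw [hsucc x.2, if_neg (show ¬ (t a).2 = x.2 by omega)] at hx1e
      have hcond' : x.2 = 0 ∨ cntCol n t (a : ℕ) x.2 < cntCol n t (a : ℕ) (x.2 - 1) := by
        rcases hcond with h0 | hlt'
        · exact Or.inl h0
        · right
          rw [hsucc x.2, if_neg (show ¬ (t a).2 = x.2 by omega),
            hsucc (x.2 - 1), if_neg (show ¬ (t a).2 = x.2 - 1 by omega)] at hlt'
          omega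
      refine ⟨x.2, ⟨hm, hcond', ?_⟩, ?_⟩
      · have heq : ((t a).2 : ℤ) - ((t a).1 : ℤ) - (((x.2 : ℤ)) - (x.1 : ℤ))
            = (cntCol n t (a : ℕ) x.2 : ℤ) - (cntCol n t (a : ℕ) (t a).2 : ℤ)
              + (((t a).2 : ℤ) - (x.2 : ℤ)) := by omega
        rw [heq] at hres
        exact hres
      · exact Prod.ext hx1e.symm rfl
    · -- x.2 = j : residue contradiction
      exfalso
      rw [hm] at hx1e hres
      rw [hsucc (t a).2, if_pos rfl] at hx1e
      have heq : ((t a).2 : ℤ) - ((t a).1 : ℤ)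
          - (((t a).2 : ℤ) - (x.1 : ℤ)) = 1 := by omega
      rw [heq] at hres
      exact not_dvd_one he hres
    · -- x.2 > j : below fails
      exfalso
      rw [hsucc x.2, if_neg (show ¬ (t a).2 = x.2 by omega)] at hx1e
      have := cnt_anti ht (a : ℕ) (le_of_lt hm)
      omega
  · rintro ⟨m, ⟨hm, hcondA, hdvd⟩, hxe⟩
    subst hxe
    have hle := cnt_le (t := t) (a : ℕ) m
    have hltc := cnt_lt ht a hm
    refine ⟨⟨?_, ?_⟩, ?_, ?_, ?_⟩
    · show cntCol n t (a : ℕ) m < n + 2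
      omega
    · show m < n + 2
      omega
    · rw [addable_iff ht]
      have e1 : cntCol n t ((a : ℕ) + 1) m = cntCol n t (a : ℕ) m := by
        rw [hsucc m, if_neg (show ¬ (t a).2 = m by omega)]
        omega
      constructor
      · exact e1.symm
      · rcases hcondA with h0 | hlt'
        · exact Or.inl h0
        · right
          have e2 : cntCol n t ((a : ℕ) + 1) (m - 1) = cntCol n t (a : ℕ) (m - 1) := by
            rw [hsucc (m - 1), if_neg (show ¬ (t a).2 = m - 1 by omega)]
            omega
          rw [e1, e2]
          exact hlt'
    · rw [resNode_eq_iff]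
      have heq : ((t a).2 : ℤ) - ((t a).1 : ℤ) - (((m : ℤ)) - (cntCol n t (a : ℕ) m : ℤ))
          = (cntCol n t (a : ℕ) m : ℤ) - (cntCol n t (a : ℕ) (t a).2 : ℤ)
            + (((t a).2 : ℤ) - (m : ℤ)) := by omega
      rw [heq]
      exact hdvd
    · show (t a).1 < cntCol n t (a : ℕ) m
      omega
end Stmt7

namespace Stmt7

open Finset

lemma Rset_eq (e k n : ℕ) (he : 2 ≤ e) {t : Fin n → ℕ × ℕ} (ht : IsStdTab n t)
    (hcols : ∀ r, (t r).2 < k) (a : Fin n) :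
    ((Finset.range (n + 2) ×ˢ Finset.range (n + 2)).filter
        fun x => Removable (diagOf n t ((a : ℕ) + 1)) x ∧
          resNode e x = resNode e (t a) ∧ (t a).1 < x.1)
      = ((Finset.range (t a).2).filter
          (rP e (fun m => cntCol n t (a : ℕ) m) (t a).2)).image
          (fun m => (cntCol n t (a : ℕ) m - 1, m)) := by
  classical
  have hrow := row_eq_cnt ht a
  have hja := col_le ht a
  have han : (a : ℕ) < n := a.isLt
  have hsucc : ∀ m, cntCol n t ((a : ℕ) + 1) m
      = cntCol n t (a : ℕ) m + if (t a).2 = m then 1 else 0 := fun m => cntCol_succ a m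
  ext x
  simp only [Finset.mem_filter, Finset.mem_product, Finset.mem_range, Finset.mem_image,
    rP, W]
  constructor
  · rintro ⟨⟨hx1, hx2⟩, hremx, hres, hbelow⟩
    rw [removable_iff ht] at hremx
    obtain ⟨hx1e, hc2⟩ := hremx
    rw [resNode_eq_iff] at hres
    rcases lt_trichotomy x.2 (t a).2 with hm | hm | hm
    · -- x.2 < j : produce the witness
      rw [hsucc x.2, if_neg (show ¬ (t a).2 = x.2 by omega)] at hx1e
      rw [hsucc (x.2 + 1)] at hc2
      refine ⟨x.2, ⟨hm, by omega, ?_⟩, ?_⟩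
      · have heq : ((t a).2 : ℤ) - ((t a).1 : ℤ) - (((x.2 : ℤ)) - (x.1 : ℤ))
            = (cntCol n t (a : ℕ) x.2 : ℤ) - (cntCol n t (a : ℕ) (t a).2 : ℤ)
              + (((t a).2 : ℤ) - (x.2 : ℤ)) - 1 := by omega
        rw [heq] at hres
        exact hres
      · exact Prod.ext (by omega) rfl
    · -- x.2 = j : below fails
      exfalso
      rw [hm] at hx1e
      rw [hsucc (t a).2, if_pos rfl] at hx1e
      omega
    · -- x.2 > j : below fails
      exfalso
      rw [hsucc x.2, if_neg (show ¬ (t a).2 = x.2 by omega)] at hx1e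
      have := cnt_anti ht (a : ℕ) (le_of_lt hm)
      omega
  · rintro ⟨m, ⟨hm, hcnd, hdvd⟩, hxe⟩
    subst hxe
    have hle := cnt_le (t := t) (a : ℕ) m
    have hpos : 1 ≤ cntCol n t (a : ℕ) m := by
      by_cases hjx : (t a).2 = m + 1
      · rw [if_pos hjx] at hcnd; omega
      · rw [if_neg hjx] at hcnd; omega
    have hbel : cntCol n t (a : ℕ) (t a).2 < cntCol n t (a : ℕ) m - 1 := by
      by_cases hjx : (t a).2 = m + 1
      · rw [if_pos hjx] at hcnd
        rw [← hjx] at hcnd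
        omega
      · rw [if_neg hjx] at hcnd
        have hltc' := cnt_lt ht a (show m + 1 < (t a).2 by omega)
        omega
    refine ⟨⟨?_, ?_⟩, ?_, ?_, ?_⟩
    · show cntCol n t (a : ℕ) m - 1 < n + 2
      omega
    · show m < n + 2
      omega
    · rw [removable_iff ht]
      constructor
      · show cntCol n t (a : ℕ) m - 1 + 1 = cntCol n t ((a : ℕ) + 1) m
        rw [hsucc m, if_neg (show ¬ (t a).2 = m by omega)]
        omega
      · show cntCol n t ((a : ℕ) + 1) (m + 1) ≤ cntCol n t (a : ℕ) m - 1
        rw [hsucc (m + 1)]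
        omega
    · rw [resNode_eq_iff]
      have heq : ((t a).2 : ℤ) - ((t a).1 : ℤ)
          - (((m : ℤ)) - ((cntCol n t (a : ℕ) m - 1 : ℕ) : ℤ))
          = (cntCol n t (a : ℕ) m : ℤ) - (cntCol n t (a : ℕ) (t a).2 : ℤ)
            + (((t a).2 : ℤ) - (m : ℤ)) - 1 := by omega
      rw [heq]
      exact hdvd
    · show (t a).1 < cntCol n t (a : ℕ) m - 1
      omega

end Stmt7

namespace Stmt7

open Finset

lemma dnode_eq (e k n : ℕ) (he : 2 ≤ e) {t : Fin n → ℕ × ℕ} (ht : IsStdTab n t)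
    (hcols : ∀ r, (t r).2 < k) (a : Fin n) :
    dnode e n (diagOf n t ((a : ℕ) + 1)) (t a)
      = (((Finset.range (t a).2).filter
            (aP e (fun m => cntCol n t (a : ℕ) m) (t a).2)).card : ℤ)
        - (((Finset.range (t a).2).filter
            (rP e (fun m => cntCol n t (a : ℕ) m) (t a).2)).card : ℤ) := by
  unfold dnode
  rw [Aset_eq e k n he ht hcols a, Rset_eq e k n he ht hcols a,
    Finset.card_image_of_injOn, Finset.card_image_of_injOn]
  · intro m _ m' _ h
    exact ((Prod.mk.injEq _ _ _ _).mp h).2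
  · intro m _ m' _ h
    exact ((Prod.mk.injEq _ _ _ _).mp h).2

lemma degPairStep_zero {e : ℕ} {U V : ℤ} (h : U ≤ V) : degPairStep e U V = 0 := by
  unfold degPairStep
  rw [if_neg, if_neg]
  · rintro ⟨_, h2⟩; omega
  · rintro ⟨_, h2⟩; omega

lemma path_step (e k n : ℕ) {t : Fin n → ℕ × ℕ} (ht : IsStdTab n t)
    (hcols : ∀ r, (t r).2 < k) (a : Fin n) :
    (∑ r ∈ Finset.range k, ∑ s ∈ Finset.Ico (r + 1) k,
      degPairStep e (pairVal n t (a : ℕ) r s) (pairVal n t ((a : ℕ) + 1) r s))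
    = ∑ m ∈ Finset.range (t a).2,
        degPairStep e (W (fun m => cntCol n t (a : ℕ) m) (t a).2 m)
          (W (fun m => cntCol n t (a : ℕ) m) (t a).2 m - 1) := by
  classical
  have hjk : (t a).2 < k := hcols a
  have hpv : ∀ r s : ℕ, pairVal n t ((a : ℕ) + 1) r s
      = pairVal n t (a : ℕ) r s + (if (t a).2 = r then 1 else 0)
        - (if (t a).2 = s then 1 else 0) := by
    intro r s
    unfold pairVal
    rw [cntCol_succ a r, cntCol_succ a s]
    split_ifs <;> push_cast <;> ring
  have hinner : ∀ r ∈ Finset.range k,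
      (∑ s ∈ Finset.Ico (r + 1) k,
        degPairStep e (pairVal n t (a : ℕ) r s) (pairVal n t ((a : ℕ) + 1) r s))
      = if r < (t a).2 then
          degPairStep e (pairVal n t (a : ℕ) r (t a).2)
            (pairVal n t (a : ℕ) r (t a).2 - 1) else 0 := by
    intro r _
    by_cases hrj : r < (t a).2
    · rw [if_pos hrj]
      have hz : ∀ s' ∈ Finset.Ico (r + 1) k, s' ≠ (t a).2 →
          degPairStep e (pairVal n t (a : ℕ) r s') (pairVal n t ((a : ℕ) + 1) r s') = 0 := by
        intro s' _ hsne
        rw [hpv, if_neg (show ¬ (t a).2 = r by omega), if_neg (fun h => hsne h.symm),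
          show pairVal n t (a : ℕ) r s' + 0 - 0 = pairVal n t (a : ℕ) r s' by ring]
        exact degPairStep_zero le_rfl
      rw [Finset.sum_eq_single_of_mem (t a).2 (Finset.mem_Ico.mpr ⟨by omega, hjk⟩) hz,
        hpv, if_neg (show ¬ (t a).2 = r by omega), if_pos rfl,
        show pairVal n t (a : ℕ) r (t a).2 + 0 - 1 = pairVal n t (a : ℕ) r (t a).2 - 1 by ring]
    · rw [if_neg hrj]
      apply Finset.sum_eq_zero
      intro s hs
      rw [Finset.mem_Ico] at hs
      by_cases hreq : (t a).2 = r
      · rw [hpv, if_pos hreq, if_neg (show ¬ (t a).2 = s by omega)]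
        apply degPairStep_zero
        omega
      · rw [hpv, if_neg hreq, if_neg (show ¬ (t a).2 = s by omega),
          show pairVal n t (a : ℕ) r s + 0 - 0 = pairVal n t (a : ℕ) r s by ring]
        exact degPairStep_zero le_rfl
  rw [Finset.sum_congr rfl hinner, ← Finset.sum_filter]
  have hfil : (Finset.range k).filter (fun r => r < (t a).2) = Finset.range (t a).2 := by
    ext r
    simp only [Finset.mem_filter, Finset.mem_range]
    omega
  rw [hfil]
  apply Finset.sum_congr rfl
  intro m _
  have hWp : pairVal n t (a : ℕ) m (t a).2
      = W (fun m => cntCol n t (a : ℕ) m) (t a).2 m := by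
    unfold pairVal W
    ring
  rw [hWp]

end Stmt7

namespace Stmt7

open Finset

lemma core (e : ℕ) (he : 2 ≤ e) (c : ℕ → ℕ) (j : ℕ)
    (hanti : ∀ m, c (m + 1) ≤ c m) (hadd : j ≠ 0 → c j < c (j - 1)) :
    (((Finset.range j).filter (aP e c j)).card : ℤ)
      - (((Finset.range j).filter (rP e c j)).card : ℤ)
      = ∑ m ∈ Finset.range j, degPairStep e (W c j m) (W c j m - 1) := by
  classical
  have hmono : ∀ {m m'}, m ≤ m' → c m' ≤ c m := fun h =>
    antitone_nat_of_succ_le hanti h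
  have hltj : ∀ m, m < j → c j < c m := by
    intro m hm
    have h1 : c (j - 1) ≤ c m := hmono (by omega)
    have h2 := hadd (by omega)
    omega
  have hW2 : ∀ m, m < j → 2 ≤ W c j m := by
    intro m hm
    have h := hltj m hm
    unfold W
    omega
  -- rewrite the degPairStep sum into two boolean sums
  have hterm : ∀ m ∈ Finset.range j,
      degPairStep e (W c j m) (W c j m - 1)
        = (if (e : ℤ) ∣ W c j m then (1 : ℤ) else 0)
          - (if (e : ℤ) ∣ W c j m - 1 then (1 : ℤ) else 0) := by
    intro m hm
    rw [Finset.mem_range] at hm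
    have h2 := hW2 m hm
    unfold degPairStep
    by_cases hd1 : (e : ℤ) ∣ W c j m
    · rw [if_pos ⟨⟨by omega, hd1⟩, by omega⟩, if_pos hd1, if_neg, sub_zero]
      intro hd2
      have h1 : (e : ℤ) ∣ 1 := by
        have := dvd_sub hd1 hd2
        simpa using this
      exact not_dvd_one he h1
    · rw [if_neg (by rintro ⟨⟨_, h⟩, _⟩; exact hd1 h), if_neg hd1]
      by_cases hd2 : (e : ℤ) ∣ W c j m - 1
      · rw [if_pos ⟨⟨by omega, hd2⟩, by omega⟩, if_pos hd2]
        ring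
      · rw [if_neg (by rintro ⟨⟨_, h⟩, _⟩; exact hd2 h), if_neg hd2]
        ring
  rw [Finset.sum_congr rfl hterm, Finset.sum_sub_distrib, Finset.sum_boole, Finset.sum_boole]
  -- split the two divisibility counts
  have key : ∀ (p q : ℕ → Prop) [DecidablePred p] [DecidablePred q],
      (((Finset.range j).filter p).card : ℤ)
        = (((Finset.range j).filter (fun m => p m ∧ q m)).card : ℤ)
          + (((Finset.range j).filter (fun m => p m ∧ ¬ q m)).card : ℤ) := by
    intro p q _ _
    have h := Finset.card_filter_add_card_filter_not
      (s := (Finset.range j).filter p) (p := q)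
    rw [Finset.filter_filter, Finset.filter_filter] at h
    exact_mod_cast h.symm
  rw [key (fun m => (e : ℤ) ∣ W c j m) (fun m => m = 0 ∨ c m < c (m - 1)),
    key (fun m => (e : ℤ) ∣ W c j m - 1)
      (fun m => c (m + 1) + (if j = m + 1 then 1 else 0) < c m)]
  have hfa : (Finset.range j).filter
        (fun m => ((e : ℤ) ∣ W c j m) ∧ (m = 0 ∨ c m < c (m - 1)))
      = (Finset.range j).filter (aP e c j) := by
    apply Finset.filter_congr
    intro m _
    unfold aP
    tauto
  have hfr : (Finset.range j).filter
        (fun m => ((e : ℤ) ∣ W c j m - 1)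
          ∧ (c (m + 1) + (if j = m + 1 then 1 else 0) < c m))
      = (Finset.range j).filter (rP e c j) := by
    apply Finset.filter_congr
    intro m _
    unfold rP
    tauto
  rw [hfa, hfr]
  have hbij : ((Finset.range j).filter
        (fun m => ((e : ℤ) ∣ W c j m) ∧ ¬(m = 0 ∨ c m < c (m - 1)))).card
      = ((Finset.range j).filter
        (fun m => ((e : ℤ) ∣ W c j m - 1)
          ∧ ¬(c (m + 1) + (if j = m + 1 then 1 else 0) < c m))).card := by
    refine Finset.card_bij' (fun m _ => m - 1) (fun m _ => m + 1) ?hi ?hj ?left ?right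
    case hi =>
      intro m hm
      simp only [Finset.mem_filter, Finset.mem_range] at hm ⊢
      obtain ⟨hmj, hdvd, hnc⟩ := hm
      push_neg at hnc
      obtain ⟨hm0, hle⟩ := hnc
      have hcc : c (m - 1) = c m := le_antisymm hle (hmono (by omega))
      refine ⟨by omega, ?_, ?_⟩
      · have heq : W c j (m - 1) - 1 = W c j m := by unfold W; omega
        rw [heq]; exact hdvd
      · rw [show m - 1 + 1 = m by omega, if_neg (show ¬ j = m by omega)]
        omega
    case hj =>
      intro m hm
      simp only [Finset.mem_filter, Finset.mem_range] at hm ⊢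
      obtain ⟨hmj, hdvd, hnr⟩ := hm
      by_cases hj1 : j = m + 1
      · exfalso
        rw [if_pos hj1] at hnr
        have hjm : j - 1 = m := by omega
        have hadd' := hadd (by omega)
        rw [hjm] at hadd'
        have hcj : c (m + 1) = c j := by rw [← hj1]
        have hW : W c j m - 1 = 1 := by unfold W; omega
        exact not_dvd_one he (hW ▸ hdvd)
      · rw [if_neg hj1] at hnr
        have hcc : c (m + 1) = c m := by have := hanti m; omega
        refine ⟨by omega, ?_, ?_⟩
        · have heq : W c j (m + 1) = W c j m - 1 := by unfold W; omega
          rw [heq]; exact hdvd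
        · rintro (h | h)
          · omega
          · rw [show m + 1 - 1 = m from rfl] at h
            omega
    case left =>
      intro m hm
      simp only [Finset.mem_filter, Finset.mem_range] at hm
      obtain ⟨_, _, hnc⟩ := hm
      push_neg at hnc
      show m - 1 + 1 = m
      omega
    case right =>
      intro m _
      show m + 1 - 1 = m
      omega
  rw [hbij]
  ring

end Stmt7

namespace Stmt7

open Finset

lemma step_eq (e k n : ℕ) (he : 2 ≤ e) {t : Fin n → ℕ × ℕ} (ht : IsStdTab n t)
    (hcols : ∀ r, (t r).2 < k) (a : Fin n) :
    dnode e n (diagOf n t ((a : ℕ) + 1)) (t a)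
      = ∑ r ∈ Finset.range k, ∑ s ∈ Finset.Ico (r + 1) k,
          degPairStep e (pairVal n t (a : ℕ) r s) (pairVal n t ((a : ℕ) + 1) r s) := by
  rw [dnode_eq e k n he ht hcols a, path_step e k n ht hcols a]
  apply core e he
  · intro m
    exact cnt_anti ht (a : ℕ) (Nat.le_succ m)
  · intro hj0
    exact add_ok ht a hj0

end Stmt7



theorem stmt7 (e k n : ℕ) (he : 2 ≤ e) (hk : 2 ≤ k)
    (t : Fin n → ℕ × ℕ) (ht : IsStdTab n t) (hcols : ∀ r, (t r).2 < k) :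
    tabDeg e n t = pathDegK e k n t := by
  unfold tabDeg pathDegK
  rw [← Fin.sum_univ_eq_sum_range (fun a => ∑ r ∈ Finset.range k,
    ∑ s ∈ Finset.Ico (r + 1) k,
      degPairStep e (pairVal n t a r s) (pairVal n t (a + 1) r s)) n]
  apply Finset.sum_congr rfl
  intro a _
  exact Stmt7.step_eq e k n he ht hcols a
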